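/- Exponential representation of |w| along a level curve (Lemma 4.3, equation (4.14)): Let w : ℝ² → ℝ² be a C¹ vector field with ∇·w = 0, let γ : [0, S] → ℝ² be a C¹ curve with γ′(s) = ξ(γ(s)) for all s, where ξ = w/‖w‖, and suppose w(γ(s)) ≠ 0 for all s ∈ [0, S]. Then ‖w(γ(S))‖ = ‖w(γ(0))‖ · exp( − ∫₀^S (∇·ξ)(γ(s)) ds ). In particular, setting m = sup_{s ∈ [0,S]} |(∇·ξ)(γ(s))|, one has e^{−mS} ‖w(γ(0))‖ ≤ ‖w(γ(S))‖ ≤ e^{mS} ‖w(γ(0))‖, so the maximum of ‖w‖ over the curve is at most e^{mS} times its minimum over the curve. -/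

import Mathlib

noncomputable section
open Real

/-- The plane, with its Euclidean structure. -/
abbrev E2 := EuclideanSpace ℝ (Fin 2)

/-- The divergence `∇·w = ∂₁w₁ + ∂₂w₂` of a planar vector field. -/
def divergence (w : E2 → E2) (x : E2) : ℝ :=
  ∑ i : Fin 2, (fderiv ℝ w x (EuclideanSpace.single i 1)) i

/-- The unit direction field `ξ = w/‖w‖` (where `w ≠ 0`). -/
def xiOf (w : E2 → E2) (x : E2) : E2 := ‖w x‖⁻¹ • w x

open scoped RealInnerProductSpace

lemma sum_smul_single (x : E2) :
    ∑ i : Fin 2, x i • (EuclideanSpace.single i (1:ℝ)) = x := by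
  ext j
  fin_cases j <;> simp [EuclideanSpace.single_apply, Fin.sum_univ_two]

lemma hasFDerivAt_xiOf (w : E2 → E2) (hw : ContDiff ℝ 1 w) (x : E2) (hx : w x ≠ 0) :
    HasFDerivAt (xiOf w)
      (((-(‖w x‖ ^ 3)⁻¹) • ((innerSL ℝ (w x)).comp (fderiv ℝ w x))).smulRight (w x)
        + ‖w x‖⁻¹ • fderiv ℝ w x) x := by
  have hD : HasFDerivAt w (fderiv ℝ w x) x :=
    (hw.differentiable one_ne_zero x).hasFDerivAt
  have hq : HasFDerivAt (fun y => ⟪w y, w y⟫)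
      ((fderivInnerCLM ℝ (w x, w x)).comp ((fderiv ℝ w x).prod (fderiv ℝ w x))) x :=
    hD.inner ℝ hD
  have hqne : ⟪w x, w x⟫ ≠ 0 := inner_self_ne_zero.mpr hx
  have hsq : Real.sqrt ⟪w x, w x⟫ = ‖w x‖ := by
    rw [real_inner_self_eq_norm_sq, Real.sqrt_sq (norm_nonneg _)]
  have hn : ‖w x‖ ≠ 0 := norm_ne_zero_iff.mpr hx
  have hq' : HasFDerivAt (fun y => Real.sqrt ⟪w y, w y⟫)
      ((1 / (2 * Real.sqrt ⟪w x, w x⟫)) •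
        ((fderivInnerCLM ℝ (w x, w x)).comp ((fderiv ℝ w x).prod (fderiv ℝ w x)))) x :=
    hq.sqrt hqne
  have hqs : Real.sqrt ⟪w x, w x⟫ ≠ 0 := hsq ▸ hn
  have hinv0 := (hasDerivAt_inv hqs).comp_hasFDerivAt x hq'
  have hinv := hinv0.smul hD
  have hfun : (fun y => (Real.sqrt ⟪w y, w y⟫)⁻¹ • w y) = xiOf w := by
    funext y
    rw [xiOf, real_inner_self_eq_norm_sq, Real.sqrt_sq (norm_nonneg _)]
  simp only [Function.comp_def] at hinv
  rw [show ((fun y => (Real.sqrt ⟪w y, w y⟫)⁻¹) • w) = xiOf w from hfun] at hinv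
  refine hinv.congr_fderiv (Eq.symm ?_)
  ext v
  simp only [ContinuousLinearMap.add_apply, ContinuousLinearMap.smulRight_apply,
    ContinuousLinearMap.smul_apply, ContinuousLinearMap.coe_comp', Function.comp_apply,
    ContinuousLinearMap.prod_apply, fderivInnerCLM_apply, innerSL_apply_apply,
    real_inner_self_eq_norm_sq, Real.sqrt_sq (norm_nonneg (w x))]
  rw [add_comm]
  have hc : (-(‖w x‖ ^ 3)⁻¹ * (inner ℝ (w x) ((fderiv ℝ w x) v) : ℝ)) =
      -(‖w x‖ ^ 2)⁻¹ * (1 / (2 * ‖w x‖) *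
        ((inner ℝ (w x) ((fderiv ℝ w x) v) : ℝ) + inner ℝ ((fderiv ℝ w x) v) (w x))) := by
    rw [real_inner_comm (w x) ((fderiv ℝ w x) v)]; field_simp; ring
  simp only [smul_eq_mul, real_inner_comm (w x) ((fderiv ℝ w x) v)]
  rw [hc, real_inner_comm ((fderiv ℝ w x) v) (w x)]

lemma divergence_xiOf (w : E2 → E2) (hw : ContDiff ℝ 1 w) (x : E2) (hx : w x ≠ 0)
    (hdx : divergence w x = 0) :
    divergence (xiOf w) x = -(‖w x‖ ^ 3)⁻¹ * ⟪w x, fderiv ℝ w x (w x)⟫ := by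
  have hF := (hasFDerivAt_xiOf w hw x hx).fderiv
  have hwx : fderiv ℝ w x (w x)
      = ∑ i : Fin 2, (w x) i • fderiv ℝ w x (EuclideanSpace.single i 1) := by
    conv_lhs => rw [← sum_smul_single (w x)]
    rw [map_sum]
    simp
  unfold divergence
  rw [hF]
  simp only [ContinuousLinearMap.add_apply, ContinuousLinearMap.smulRight_apply,
    ContinuousLinearMap.smul_apply, ContinuousLinearMap.coe_comp', Function.comp_apply,
    innerSL_apply_apply, PiLp.add_apply, PiLp.smul_apply, smul_eq_mul]
  rw [Finset.sum_add_distrib]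
  have h2 : ∑ i : Fin 2, ‖w x‖⁻¹ * (fderiv ℝ w x (EuclideanSpace.single i 1)) i
      = ‖w x‖⁻¹ * divergence w x := by
    rw [divergence, Finset.mul_sum]
  rw [h2, hdx, mul_zero, add_zero, hwx, inner_sum, Finset.mul_sum]
  congr 1
  funext i
  rw [real_inner_smul_right]
  ring

lemma key_exp (w : E2 → E2) (hw : ContDiff ℝ 1 w)
    (hdiv : ∀ y : E2, divergence w y = 0)
    (S : ℝ) (γ : ℝ → E2)
    (hγ : ∀ s ∈ Set.Icc 0 S, HasDerivAt γ (xiOf w (γ s)) s)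
    (hnz : ∀ s ∈ Set.Icc 0 S, w (γ s) ≠ 0)
    {a : ℝ} (ha : a ∈ Set.Icc 0 S) :
    ‖w (γ a)‖ = ‖w (γ 0)‖ *
      Real.exp (-∫ s in (0:ℝ)..a, divergence (xiOf w) (γ s)) := by
  set g : ℝ → ℝ := fun s => divergence (xiOf w) (γ s) with hg
  -- continuity of g on the curve
  have hγc : ContinuousOn γ (Set.Icc 0 S) :=
    fun s hs => (hγ s hs).continuousAt.continuousWithinAt
  have hwc : ContinuousOn (fun s => w (γ s)) (Set.Icc 0 S) :=
    (hw.continuous).comp_continuousOn hγc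
  have hDc : ContinuousOn (fun s => fderiv ℝ w (γ s)) (Set.Icc 0 S) :=
    (hw.continuous_fderiv one_ne_zero).comp_continuousOn hγc
  have hGc : ContinuousOn
      (fun s => -(‖w (γ s)‖ ^ 3)⁻¹ * ⟪w (γ s), fderiv ℝ w (γ s) (w (γ s))⟫)
      (Set.Icc 0 S) := by
    apply ContinuousOn.mul
    · exact (((hwc.norm.pow 3).inv₀
        (fun s hs => pow_ne_zero 3 (norm_ne_zero_iff.mpr (hnz s hs)))).neg)
    · exact hwc.inner (hDc.clm_apply hwc)
  have hcont : ContinuousOn g (Set.Icc 0 S) :=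
    hGc.congr (fun s hs => divergence_xiOf w hw (γ s) (hnz s hs) (hdiv (γ s)))
  -- the logarithmic derivative
  set h : ℝ → ℝ := fun s => Real.log ⟪w (γ s), w (γ s)⟫ with hh
  have hd : ∀ s ∈ Set.Icc (0:ℝ) a, HasDerivAt h (-2 * g s) s := by
    intro s hs
    have hsS : s ∈ Set.Icc 0 S := ⟨hs.1, hs.2.trans ha.2⟩
    have hune : w (γ s) ≠ 0 := hnz s hsS
    have hn : ‖w (γ s)‖ ≠ 0 := norm_ne_zero_iff.mpr hune
    have hu : HasDerivAt (fun t => w (γ t)) (fderiv ℝ w (γ s) (xiOf w (γ s))) s :=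
      ((hw.differentiable one_ne_zero (γ s)).hasFDerivAt).comp_hasDerivAt s (hγ s hsS)
    have hqd := hu.inner ℝ hu
    have hlog := hqd.log (inner_self_ne_zero.mpr hune)
    convert hlog using 1
    rw [hg]
    simp only
    rw [divergence_xiOf w hw (γ s) hune (hdiv (γ s)), xiOf, map_smul,
      real_inner_smul_right, real_inner_smul_left,
      real_inner_comm (fderiv ℝ w (γ s) (w (γ s))) (w (γ s)),
      real_inner_self_eq_norm_sq]
    field_simp
    ring
  -- FTC
  have hsub : Set.Icc (0:ℝ) a ⊆ Set.Icc 0 S := Set.Icc_subset_Icc le_rfl ha.2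
  have hint : IntervalIntegrable g MeasureTheory.volume 0 a := by
    apply ContinuousOn.intervalIntegrable
    rw [Set.uIcc_of_le ha.1]
    exact hcont.mono hsub
  have hint2 : IntervalIntegrable (fun s => -2 * g s) MeasureTheory.volume 0 a :=
    hint.const_mul (-2)
  have hFTC : ∫ s in (0:ℝ)..a, (-2 * g s) = h a - h 0 := by
    apply intervalIntegral.integral_eq_sub_of_hasDerivAt
    · intro s hs
      exact hd s (by rwa [Set.uIcc_of_le ha.1] at hs)
    · exact hint2
  rw [intervalIntegral.integral_const_mul] at hFTC
  set I : ℝ := ∫ s in (0:ℝ)..a, g s with hI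
  -- conclude
  have ha0 : (0:ℝ) ∈ Set.Icc (0:ℝ) S := ⟨le_rfl, (ha.1).trans ha.2⟩
  have hpos : (0:ℝ) < ⟪w (γ a), w (γ a)⟫ := by
    rw [real_inner_self_eq_norm_sq]; exact pow_pos (norm_pos_iff.mpr (hnz a ha)) 2
  have hpos0 : (0:ℝ) < ⟪w (γ 0), w (γ 0)⟫ := by
    rw [real_inner_self_eq_norm_sq]; exact pow_pos (norm_pos_iff.mpr (hnz 0 ha0)) 2
  have hexp : ⟪w (γ a), w (γ a)⟫ = ⟪w (γ 0), w (γ 0)⟫ * Real.exp (-2 * I) := by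
    have h1 : h a = h 0 + (-2) * I := by linarith
    have := congrArg Real.exp h1
    rw [hh] at this
    simp only at this
    rw [Real.exp_log hpos, Real.exp_add, Real.exp_log hpos0] at this
    exact this
  have hsq : ‖w (γ a)‖ ^ 2 = (‖w (γ 0)‖ * Real.exp (-I)) ^ 2 := by
    rw [← real_inner_self_eq_norm_sq, hexp, real_inner_self_eq_norm_sq,
      mul_pow, ← Real.exp_nat_mul]
    ring_nf
  have := congrArg Real.sqrt hsq
  rwa [Real.sqrt_sq (norm_nonneg _), Real.sqrt_sq (by positivity)] at this

lemma contOn_div_xi (w : E2 → E2) (hw : ContDiff ℝ 1 w)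
    (hdiv : ∀ y : E2, divergence w y = 0)
    (S : ℝ) (γ : ℝ → E2)
    (hγ : ∀ s ∈ Set.Icc 0 S, HasDerivAt γ (xiOf w (γ s)) s)
    (hnz : ∀ s ∈ Set.Icc 0 S, w (γ s) ≠ 0) :
    ContinuousOn (fun s => divergence (xiOf w) (γ s)) (Set.Icc 0 S) := by
  have hγc : ContinuousOn γ (Set.Icc 0 S) :=
    fun s hs => (hγ s hs).continuousAt.continuousWithinAt
  have hwc : ContinuousOn (fun s => w (γ s)) (Set.Icc 0 S) :=
    (hw.continuous).comp_continuousOn hγc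
  have hDc : ContinuousOn (fun s => fderiv ℝ w (γ s)) (Set.Icc 0 S) :=
    (hw.continuous_fderiv one_ne_zero).comp_continuousOn hγc
  have hGc : ContinuousOn
      (fun s => -(‖w (γ s)‖ ^ 3)⁻¹ * ⟪w (γ s), fderiv ℝ w (γ s) (w (γ s))⟫)
      (Set.Icc 0 S) := by
    apply ContinuousOn.mul
    · exact (((hwc.norm.pow 3).inv₀
        (fun s hs => pow_ne_zero 3 (norm_ne_zero_iff.mpr (hnz s hs)))).neg)
    · exact hwc.inner (hDc.clm_apply hwc)
  exact hGc.congr (fun s hs => divergence_xiOf w hw (γ s) (hnz s hs) (hdiv (γ s)))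

/-- Exponential representation of `‖w‖` along a level curve (Lemma 4.3, eq. (4.14)):
along an arc-length parametrized integral curve `γ` of `ξ = w/‖w‖`,
`‖w(γ(S))‖ = ‖w(γ(0))‖ exp(-∫₀^S (∇·ξ)(γ(s)) ds)`; in particular, if
`|∇·ξ| ≤ m` on the curve then `e^{-mS}‖w(γ(0))‖ ≤ ‖w(γ(S))‖ ≤ e^{mS}‖w(γ(0))‖`,
and the maximum of `‖w‖` over the curve is at most `e^{mS}` times its minimum. -/
theorem norm_along_level_curve_exponential
    (w : E2 → E2) (hw : ContDiff ℝ 1 w)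
    (hdiv : ∀ y : E2, divergence w y = 0)
    (S : ℝ) (hS : 0 ≤ S) (γ : ℝ → E2)
    (hγ : ∀ s ∈ Set.Icc 0 S, HasDerivAt γ (xiOf w (γ s)) s)
    (hnz : ∀ s ∈ Set.Icc 0 S, w (γ s) ≠ 0) :
    ‖w (γ S)‖ = ‖w (γ 0)‖ *
        Real.exp (-∫ s in (0:ℝ)..S, divergence (xiOf w) (γ s)) ∧
    ∀ m : ℝ, (∀ s ∈ Set.Icc 0 S, |divergence (xiOf w) (γ s)| ≤ m) →
      (Real.exp (-(m * S)) * ‖w (γ 0)‖ ≤ ‖w (γ S)‖ ∧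
       ‖w (γ S)‖ ≤ Real.exp (m * S) * ‖w (γ 0)‖ ∧
       ∀ s₁ ∈ Set.Icc 0 S, ∀ s₂ ∈ Set.Icc 0 S,
         ‖w (γ s₁)‖ ≤ Real.exp (m * S) * ‖w (γ s₂)‖) := by
  have hkey : ∀ a ∈ Set.Icc (0:ℝ) S, ‖w (γ a)‖ = ‖w (γ 0)‖ *
      Real.exp (-∫ s in (0:ℝ)..a, divergence (xiOf w) (γ s)) :=
    fun a ha => key_exp w hw hdiv S γ hγ hnz ha
  have hcont := contOn_div_xi w hw hdiv S γ hγ hnz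
  set g : ℝ → ℝ := fun s => divergence (xiOf w) (γ s) with hgdef
  have hSmem : S ∈ Set.Icc (0:ℝ) S := ⟨hS, le_rfl⟩
  have hint : ∀ a ∈ Set.Icc (0:ℝ) S, IntervalIntegrable g MeasureTheory.volume 0 a := by
    intro a ha
    apply ContinuousOn.intervalIntegrable
    rw [Set.uIcc_of_le ha.1]
    exact hcont.mono (Set.Icc_subset_Icc le_rfl ha.2)
  refine ⟨hkey S hSmem, ?_⟩
  intro m hm
  have hm0 : (0:ℝ) ≤ m := (abs_nonneg _).trans (hm 0 ⟨le_rfl, hS⟩)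
  -- bound on partial integrals
  have hIb : ∀ s₁ ∈ Set.Icc (0:ℝ) S, ∀ s₂ ∈ Set.Icc (0:ℝ) S,
      |∫ s in s₁..s₂, g s| ≤ m * S := by
    intro s₁ h₁ s₂ h₂
    have hb : ∀ x ∈ Set.uIoc s₁ s₂, ‖g x‖ ≤ m := by
      intro x hx
      have hx' : x ∈ Set.Icc (0:ℝ) S := by
        have := Set.Ioc_subset_Icc_self hx
        exact ⟨(le_min h₁.1 h₂.1).trans this.1, this.2.trans (max_le h₁.2 h₂.2)⟩
      simpa using hm x hx'
    have := intervalIntegral.norm_integral_le_of_norm_le_const hb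
    have habs : |s₂ - s₁| ≤ S := by
      rw [abs_sub_le_iff]; constructor <;> linarith [h₁.1, h₁.2, h₂.1, h₂.2]
    calc |∫ s in s₁..s₂, g s| ≤ m * |s₂ - s₁| := by simpa using this
      _ ≤ m * S := by exact mul_le_mul_of_nonneg_left habs hm0
  -- the three statements
  have hmain : ∀ s₁ ∈ Set.Icc (0:ℝ) S, ∀ s₂ ∈ Set.Icc (0:ℝ) S,
      ‖w (γ s₁)‖ ≤ Real.exp (m * S) * ‖w (γ s₂)‖ := by
    intro s₁ h₁ s₂ h₂
    set I₁ : ℝ := ∫ s in (0:ℝ)..s₁, g s with hI₁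
    set I₂ : ℝ := ∫ s in (0:ℝ)..s₂, g s with hI₂
    have e₁ := hkey s₁ h₁
    have e₂ := hkey s₂ h₂
    have hdiffI : I₂ - I₁ = ∫ s in s₁..s₂, g s :=
      intervalIntegral.integral_interval_sub_left (hint s₂ h₂) (hint s₁ h₁)
    have hb := hIb s₁ h₁ s₂ h₂
    rw [← hdiffI] at hb
    have hbb : I₂ - I₁ ≤ m * S := (abs_le.mp hb).2
    have h0nn : (0:ℝ) ≤ ‖w (γ 0)‖ := norm_nonneg _
    calc ‖w (γ s₁)‖ = ‖w (γ 0)‖ * Real.exp (-I₁) := e₁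
      _ = (‖w (γ 0)‖ * Real.exp (-I₂)) * Real.exp (I₂ - I₁) := by
          rw [mul_assoc, ← Real.exp_add]; ring_nf
      _ = ‖w (γ s₂)‖ * Real.exp (I₂ - I₁) := by rw [← e₂]
      _ ≤ ‖w (γ s₂)‖ * Real.exp (m * S) := by
          exact mul_le_mul_of_nonneg_left (Real.exp_le_exp.mpr hbb) (norm_nonneg _)
      _ = Real.exp (m * S) * ‖w (γ s₂)‖ := mul_comm _ _
  have h0mem : (0:ℝ) ∈ Set.Icc (0:ℝ) S := ⟨le_rfl, hS⟩
  refine ⟨?_, hmain S hSmem 0 h0mem, hmain⟩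
  -- lower bound
  have := hmain 0 h0mem S hSmem
  have hwS : (0:ℝ) ≤ ‖w (γ S)‖ := norm_nonneg _
  have hexppos : (0:ℝ) < Real.exp (m * S) := Real.exp_pos _
  rw [Real.exp_neg]
  rw [inv_mul_le_iff₀ hexppos]
  exact this
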